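/- Let F be an algebraically closed field, f(ξ) ∈ F[ξ] a nonzero polynomial of degree n > 1 with zero constant term, and c an element of the split octonion algebra O over F. Then the set X = {x ∈ O : f(x) = c} is infinite if and only if c = γ·1 for some γ ∈ F. -/
import Mathlib


noncomputable section

/-- The split octonion algebra over `F`, given by Zorn vector matrices
`(x1, u; v, x2)` with `x1, x2 ∈ F` and `u, v ∈ F³`. -/
@[ext]
structure SplitOctonion (F : Type*) where
  x1 : F
  u : Fin 3 → F
  v : Fin 3 → F
  x2 : F

namespace SplitOctonion

variable {F : Type*} [Field F]

/-- Dot product on `F³`. -/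
def dot (x y : Fin 3 → F) : F := x 0 * y 0 + x 1 * y 1 + x 2 * y 2

/-- Cross product on `F³`. -/
def cross (x y : Fin 3 → F) : Fin 3 → F :=
  ![x 1 * y 2 - x 2 * y 1, x 2 * y 0 - x 0 * y 2, x 0 * y 1 - x 1 * y 0]

instance : Zero (SplitOctonion F) := ⟨⟨0, 0, 0, 0⟩⟩
instance : One (SplitOctonion F) := ⟨⟨1, 0, 0, 1⟩⟩
instance : Add (SplitOctonion F) :=
  ⟨fun x y => ⟨x.x1 + y.x1, x.u + y.u, x.v + y.v, x.x2 + y.x2⟩⟩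
instance : Neg (SplitOctonion F) := ⟨fun x => ⟨-x.x1, -x.u, -x.v, -x.x2⟩⟩
instance : SMul F (SplitOctonion F) :=
  ⟨fun c x => ⟨c * x.x1, c • x.u, c • x.v, c * x.x2⟩⟩

/-- Zorn vector matrix multiplication. -/
instance : Mul (SplitOctonion F) :=
  ⟨fun x y => ⟨x.x1 * y.x1 + dot x.u y.v,
    x.x1 • y.u + y.x2 • x.u - cross x.v y.v,
    y.x1 • x.v + x.x2 • y.v + cross x.u y.u,
    x.x2 * y.x2 + dot x.v y.u⟩⟩

@[simp] lemma zero_x1 : (0 : SplitOctonion F).x1 = 0 := rfl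
@[simp] lemma zero_u : (0 : SplitOctonion F).u = 0 := rfl
@[simp] lemma zero_v : (0 : SplitOctonion F).v = 0 := rfl
@[simp] lemma zero_x2 : (0 : SplitOctonion F).x2 = 0 := rfl
@[simp] lemma add_x1 (x y : SplitOctonion F) : (x + y).x1 = x.x1 + y.x1 := rfl
@[simp] lemma add_u (x y : SplitOctonion F) : (x + y).u = x.u + y.u := rfl
@[simp] lemma add_v (x y : SplitOctonion F) : (x + y).v = x.v + y.v := rfl
@[simp] lemma add_x2 (x y : SplitOctonion F) : (x + y).x2 = x.x2 + y.x2 := rfl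
@[simp] lemma neg_x1 (x : SplitOctonion F) : (-x).x1 = -x.x1 := rfl
@[simp] lemma neg_u (x : SplitOctonion F) : (-x).u = -x.u := rfl
@[simp] lemma neg_v (x : SplitOctonion F) : (-x).v = -x.v := rfl
@[simp] lemma neg_x2 (x : SplitOctonion F) : (-x).x2 = -x.x2 := rfl
@[simp] lemma smul_x1 (c : F) (x : SplitOctonion F) : (c • x).x1 = c * x.x1 := rfl
@[simp] lemma smul_u (c : F) (x : SplitOctonion F) : (c • x).u = c • x.u := rfl
@[simp] lemma smul_v (c : F) (x : SplitOctonion F) : (c • x).v = c • x.v := rfl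
@[simp] lemma smul_x2 (c : F) (x : SplitOctonion F) : (c • x).x2 = c * x.x2 := rfl

instance : AddCommGroup (SplitOctonion F) where
  add_assoc x y z := by ext <;> simp [add_assoc]
  zero_add x := by ext <;> simp
  add_zero x := by ext <;> simp
  add_comm x y := by ext <;> simp [add_comm]
  neg_add_cancel x := by ext <;> simp
  nsmul := nsmulRec
  zsmul := zsmulRec

instance : Module F (SplitOctonion F) where
  one_smul x := by ext <;> simp
  mul_smul c d x := by ext <;> simp [mul_assoc, mul_smul]
  smul_zero c := by ext <;> simp
  smul_add c x y := by ext <;> simp [mul_add, smul_add]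
  add_smul c d x := by ext <;> simp [add_mul, add_smul]
  zero_smul x := by ext <;> simp

/-- Powers of a single octonion (well defined by power-associativity). -/
def npow (x : SplitOctonion F) : ℕ → SplitOctonion F
  | 0 => 1
  | n + 1 => npow x n * x

instance : Pow (SplitOctonion F) ℕ := ⟨npow⟩

/-- Substitution of an octonion into a polynomial over `F`:
`f(x) = αₙ xⁿ + ⋯ + α₁ x + α₀ • 1`. -/
def peval (f : Polynomial F) (x : SplitOctonion F) : SplitOctonion F :=
  f.sum fun i c => c • x ^ i

/-- The octonion `e₁`. -/
def e1 : SplitOctonion F := ⟨1, 0, 0, 0⟩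
/-- The octonion `e₂`. -/
def e2 : SplitOctonion F := ⟨0, 0, 0, 1⟩
/-- The octonion `u₁`. -/
def u1 : SplitOctonion F := ⟨0, ![1, 0, 0], 0, 0⟩

/-- Conjugation on `O`. -/
def conj (x : SplitOctonion F) : SplitOctonion F := ⟨x.x2, -x.u, -x.v, x.x1⟩

/-- The norm of an octonion. -/
def normO (x : SplitOctonion F) : F := x.x1 * x.x2 - dot x.u x.v

/-- The trace of an octonion. -/
def trO (x : SplitOctonion F) : F := x.x1 + x.x2

/-- `g` is an `F`-algebra automorphism of `O`: a linear bijection preserving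
multiplication (and the unit). -/
def IsAlgAut (g : SplitOctonion F ≃ₗ[F] SplitOctonion F) : Prop :=
  g 1 = 1 ∧ ∀ x y, g (x * y) = g x * g y


section Aux

open Polynomial

variable {F : Type*} [Field F]

@[simp] lemma mul_x1 (x y : SplitOctonion F) :
    (x * y).x1 = x.x1 * y.x1 + dot x.u y.v := rfl
@[simp] lemma mul_u (x y : SplitOctonion F) :
    (x * y).u = x.x1 • y.u + y.x2 • x.u - cross x.v y.v := rfl
@[simp] lemma mul_v (x y : SplitOctonion F) :
    (x * y).v = y.x1 • x.v + x.x2 • y.v + cross x.u y.u := rfl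
@[simp] lemma mul_x2 (x y : SplitOctonion F) :
    (x * y).x2 = x.x2 * y.x2 + dot x.v y.u := rfl
@[simp] lemma one_x1 : (1 : SplitOctonion F).x1 = 1 := rfl
@[simp] lemma one_u : (1 : SplitOctonion F).u = 0 := rfl
@[simp] lemma one_v : (1 : SplitOctonion F).v = 0 := rfl
@[simp] lemma one_x2 : (1 : SplitOctonion F).x2 = 1 := rfl

lemma pow_zero' (x : SplitOctonion F) : x ^ (0 : ℕ) = 1 := rfl
lemma pow_succ' (x : SplitOctonion F) (k : ℕ) : x ^ (k + 1) = x ^ k * x := rfl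

@[simp] lemma dot_zero_left (y : Fin 3 → F) : dot (0 : Fin 3 → F) y = 0 := by
  simp [dot]
@[simp] lemma dot_zero_right (y : Fin 3 → F) : dot y (0 : Fin 3 → F) = 0 := by
  simp [dot]
lemma dot_smul_smul (a b : F) (xx yy : Fin 3 → F) :
    dot (a • xx) (b • yy) = a * b * dot xx yy := by
  simp [dot]; ring
@[simp] lemma cross_zero_left (y : Fin 3 → F) : cross (0 : Fin 3 → F) y = 0 := by
  funext i; fin_cases i <;> simp [cross]
@[simp] lemma cross_zero_right (y : Fin 3 → F) : cross y (0 : Fin 3 → F) = 0 := by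
  funext i; fin_cases i <;> simp [cross]
@[simp] lemma cross_self (y : Fin 3 → F) : cross y y = 0 := by
  funext i; fin_cases i <;> simp [cross, mul_comm]

lemma octo_one_mul (x : SplitOctonion F) : 1 * x = x := by
  ext <;> simp
lemma octo_add_mul (x y z : SplitOctonion F) : (x + y) * z = x * z + y * z := by
  ext
  · simp [dot]; ring
  · rename_i i; fin_cases i <;> (simp [cross, Matrix.vecHead, Matrix.vecTail, Function.comp]; ring)
  · rename_i i; fin_cases i <;> (simp [cross, Matrix.vecHead, Matrix.vecTail, Function.comp]; ring)
  · simp [dot]; ring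
lemma octo_smul_mul (a : F) (x y : SplitOctonion F) : (a • x) * y = a • (x * y) := by
  ext
  · simp [dot]; ring
  · rename_i i; fin_cases i <;> (simp [cross, Matrix.vecHead, Matrix.vecTail, Function.comp]; ring)
  · rename_i i; fin_cases i <;> (simp [cross, Matrix.vecHead, Matrix.vecTail, Function.comp]; ring)
  · simp [dot]; ring

/-- Every split octonion satisfies its characteristic quadratic. -/
lemma octo_sq (x : SplitOctonion F) :
    x * x = trO x • x - normO x • (1 : SplitOctonion F) := by
  have hd : dot x.u x.v = dot x.v x.u := by simp [dot]; ring
  ext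
  · simp [trO, normO, sub_eq_add_neg]; ring
  · rename_i i; fin_cases i <;> (simp [trO, sub_eq_add_neg, cross, Matrix.vecHead, Matrix.vecTail, Function.comp]; ring)
  · rename_i i; fin_cases i <;> (simp [trO, sub_eq_add_neg, cross, Matrix.vecHead, Matrix.vecTail, Function.comp]; ring)
  · simp [trO, normO, sub_eq_add_neg, hd]; ring

/-- The divided power sums `h_k(λ,μ) = Σ_{i<k} λ^i μ^(k-1-i)`. -/
def geomH (l m : F) : ℕ → F
  | 0 => 0
  | k + 1 => l ^ k + m * geomH l m k

def bco (l m : F) : ℕ → F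
  | 0 => 1
  | k + 1 => -(l * m) * geomH l m k

@[simp] lemma geomH_zero (l m : F) : geomH l m 0 = 0 := rfl
lemma geomH_succ (l m : F) (k : ℕ) : geomH l m (k + 1) = l ^ k + m * geomH l m k := rfl
@[simp] lemma bco_zero (l m : F) : bco l m 0 = 1 := rfl
lemma bco_succ (l m : F) (k : ℕ) : bco l m (k + 1) = -(l * m) * geomH l m k := rfl

lemma geomH_succ' (l m : F) (k : ℕ) : geomH l m (k + 1) = m ^ k + l * geomH l m k := by
  induction k with
  | zero => simp [geomH]
  | succ k ih =>
    rw [geomH_succ l m (k+1)]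
    nth_rewrite 1 [ih]
    rw [geomH_succ l m k]
    ring

lemma sub_mul_geomH (l m : F) (k : ℕ) : (l - m) * geomH l m k = l ^ k - m ^ k := by
  cases k with
  | zero => simp
  | succ k =>
    rw [sub_mul]
    nth_rewrite 1 [geomH_succ l m k]
    rw [geomH_succ' l m k]
    ring

lemma geomH_diag (l : F) (k : ℕ) : geomH l l k = k * l ^ (k - 1) := by
  induction k with
  | zero => simp
  | succ k ih =>
    rw [geomH_succ, ih]
    cases k with
    | zero => norm_num
    | succ k => simp only [Nat.add_sub_cancel, Nat.cast_add, Nat.cast_one, Nat.cast_ofNat]; ring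

lemma geomH_rec (l m : F) (k : ℕ) :
    geomH l m (k + 1) = (l + m) * geomH l m k + bco l m k := by
  cases k with
  | zero => simp [geomH]
  | succ k => rw [geomH_succ l m (k+1), geomH_succ l m k, bco_succ]; ring

lemma bco_add_left (l m : F) (k : ℕ) : bco l m k + l * geomH l m k = l ^ k := by
  cases k with
  | zero => simp
  | succ k => rw [bco_succ, geomH_succ l m k]; ring

lemma bco_add_right (l m : F) (k : ℕ) : bco l m k + m * geomH l m k = m ^ k := by
  cases k with
  | zero => simp
  | succ k => rw [bco_succ, geomH_succ' l m k]; ring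

lemma octo_pow_eq {x : SplitOctonion F} {l m : F}
    (hx : x * x = (l + m) • x - (l * m) • 1) (k : ℕ) :
    x ^ k = geomH l m k • x + bco l m k • (1 : SplitOctonion F) := by
  induction k with
  | zero => rw [pow_zero']; simp
  | succ k ih =>
    rw [pow_succ', ih, octo_add_mul, octo_smul_mul, octo_smul_mul, hx, octo_one_mul,
      geomH_rec, bco_succ]
    rw [smul_sub, smul_smul, smul_smul]
    module

lemma octo_peval_eq (f : Polynomial F) {x : SplitOctonion F} {l m : F}
    (hx : x * x = (l + m) • x - (l * m) • 1) :
    peval f x = (f.sum fun k ck => ck * geomH l m k) • x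
      + (f.sum fun k ck => ck * bco l m k) • (1 : SplitOctonion F) := by
  unfold peval
  rw [Polynomial.sum_def, Polynomial.sum_def, Polynomial.sum_def]
  rw [Finset.sum_smul, Finset.sum_smul, ← Finset.sum_add_distrib]
  refine Finset.sum_congr rfl fun k _ => ?_
  rw [octo_pow_eq hx k, smul_add, smul_smul, smul_smul]

lemma sum_eval_left (f : Polynomial F) (l m : F) :
    (f.sum fun k ck => ck * bco l m k) + (f.sum fun k ck => ck * geomH l m k) * l
      = f.eval l := by
  rw [eval_eq_sum, Polynomial.sum_def, Polynomial.sum_def, Polynomial.sum_def,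
    Finset.sum_mul, ← Finset.sum_add_distrib]
  refine Finset.sum_congr rfl fun k _ => ?_
  have := bco_add_left l m k
  linear_combination (f.coeff k) * this

lemma sum_eval_right (f : Polynomial F) (l m : F) :
    (f.sum fun k ck => ck * bco l m k) + (f.sum fun k ck => ck * geomH l m k) * m
      = f.eval m := by
  rw [eval_eq_sum, Polynomial.sum_def, Polynomial.sum_def, Polynomial.sum_def,
    Finset.sum_mul, ← Finset.sum_add_distrib]
  refine Finset.sum_congr rfl fun k _ => ?_
  have := bco_add_right l m k
  linear_combination (f.coeff k) * this

/-- component additive homs. -/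
def x1Hom : SplitOctonion F →+ F where
  toFun := SplitOctonion.x1
  map_zero' := rfl
  map_add' _ _ := rfl

def x2Hom : SplitOctonion F →+ F where
  toFun := SplitOctonion.x2
  map_zero' := rfl
  map_add' _ _ := rfl

def uHom (i : Fin 3) : SplitOctonion F →+ F where
  toFun x := x.u i
  map_zero' := rfl
  map_add' _ _ := rfl

def vHom (i : Fin 3) : SplitOctonion F →+ F where
  toFun x := x.v i
  map_zero' := rfl
  map_add' _ _ := rfl

lemma sum_x1 {ι : Type*} (s : Finset ι) (g : ι → SplitOctonion F) :
    (∑ i ∈ s, g i).x1 = ∑ i ∈ s, (g i).x1 := map_sum x1Hom g s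

lemma sum_x2 {ι : Type*} (s : Finset ι) (g : ι → SplitOctonion F) :
    (∑ i ∈ s, g i).x2 = ∑ i ∈ s, (g i).x2 := map_sum x2Hom g s

lemma sum_u {ι : Type*} (s : Finset ι) (g : ι → SplitOctonion F) (j : Fin 3) :
    (∑ i ∈ s, g i).u j = ∑ i ∈ s, (g i).u j := map_sum (uHom j) g s

lemma sum_v {ι : Type*} (s : Finset ι) (g : ι → SplitOctonion F) (j : Fin 3) :
    (∑ i ∈ s, g i).v j = ∑ i ∈ s, (g i).v j := map_sum (vHom j) g s

def uFunHom : SplitOctonion F →+ (Fin 3 → F) where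
  toFun := SplitOctonion.u
  map_zero' := rfl
  map_add' _ _ := rfl

def vFunHom : SplitOctonion F →+ (Fin 3 → F) where
  toFun := SplitOctonion.v
  map_zero' := rfl
  map_add' _ _ := rfl

lemma sum_ufun {ι : Type*} (s : Finset ι) (g : ι → SplitOctonion F) :
    (∑ i ∈ s, g i).u = ∑ i ∈ s, (g i).u := map_sum uFunHom g s

lemma sum_vfun {ι : Type*} (s : Finset ι) (g : ι → SplitOctonion F) :
    (∑ i ∈ s, g i).v = ∑ i ∈ s, (g i).v := map_sum vFunHom g s

end Aux

end SplitOctonion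

open SplitOctonion Polynomial in
/-- the solution set of `f(x) = c` is infinite iff `c` is scalar. -/
theorem infinite_solutions_iff {F : Type*} [Field F] [IsAlgClosed F]
    (f : Polynomial F) (hf : f ≠ 0) (hdeg : 1 < f.natDegree) (hf0 : f.coeff 0 = 0)
    (c : SplitOctonion F) :
    {x : SplitOctonion F | peval f x = c}.Infinite ↔
      ∃ γ : F, c = γ • (1 : SplitOctonion F) := by
  constructor
  · -- infinite → scalar
    intro hinf
    by_contra hc
    push_neg at hc
    set g : Polynomial F := f * f - C (trO c) * f + C (normO c) with hgdef
    have hg : g ≠ 0 := by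
      have h1 : (f * f).coeff (f.natDegree + f.natDegree)
          = f.leadingCoeff * f.leadingCoeff := coeff_mul_degree_add_degree f f
      have h2 : (C (trO c) * f).coeff (f.natDegree + f.natDegree) = 0 := by
        rw [coeff_C_mul, coeff_eq_zero_of_natDegree_lt (by omega), mul_zero]
      have h3 : (C (normO c)).coeff (f.natDegree + f.natDegree) = 0 := by
        rw [coeff_C, if_neg (by omega)]
      have hco : g.coeff (f.natDegree + f.natDegree)
          = f.leadingCoeff * f.leadingCoeff := by
        rw [hgdef, coeff_add, coeff_sub, h1, h2, h3, sub_zero, add_zero]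
      intro h0
      rw [h0, coeff_zero] at hco
      exact (mul_ne_zero (leadingCoeff_ne_zero.mpr hf)
        (leadingCoeff_ne_zero.mpr hf)) hco.symm
    have hSfin : {l : F | IsRoot g l}.Finite := finite_setOf_isRoot hg
    have hsub : {x : SplitOctonion F | peval f x = c} ⊆
        (fun p : F × F => (f.sum fun k ck => ck * geomH p.1 p.2 k)⁻¹ •
          (c - (f.sum fun k ck => ck * bco p.1 p.2 k) • 1)) ''
          ({l : F | IsRoot g l} ×ˢ {l : F | IsRoot g l}) := by
      intro x hx
      obtain ⟨l, hl0⟩ := IsAlgClosed.exists_root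
        (C 1 * X ^ 2 + C (-(trO x)) * X + C (normO x))
        (by rw [Polynomial.degree_quadratic one_ne_zero]; simp)
      have hquad : l * l - trO x * l + normO x = 0 := by
        have := hl0
        simp only [IsRoot.def, eval_add, eval_mul, eval_pow, eval_C, eval_X, one_mul] at this
        linear_combination this
      set m : F := trO x - l with hm
      have hlm1 : l + m = trO x := by rw [hm]; ring
      have hlm2 : l * m = normO x := by rw [hm]; linear_combination -hquad
      have hxx : x * x = (l + m) • x - (l * m) • (1 : SplitOctonion F) := by
        rw [hlm1, hlm2]; exact octo_sq x
      set B : F := f.sum fun k ck => ck * geomH l m k with hB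
      set A : F := f.sum fun k ck => ck * bco l m k with hA
      have hpe : B • x + A • (1 : SplitOctonion F) = c := by
        rw [← octo_peval_eq f hxx]; exact hx
      have hBne : B ≠ 0 := by
        intro h0
        exact hc A (by rw [← hpe, h0, zero_smul, zero_add])
      have hAl : A + B * l = f.eval l := sum_eval_left f l m
      have hAm : A + B * m = f.eval m := sum_eval_right f l m
      have h1 : c.x1 = B * x.x1 + A := by rw [← hpe]; simp
      have h2 : c.x2 = B * x.x2 + A := by rw [← hpe]; simp
      have hu : c.u = B • x.u := by rw [← hpe]; simp
      have hv : c.v = B • x.v := by rw [← hpe]; simp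
      have ht : x.x1 + x.x2 = l + m := hlm1.symm
      have hnrm : x.x1 * x.x2 - dot x.u x.v = l * m := hlm2.symm
      have htc : trO c = f.eval l + f.eval m := by
        show c.x1 + c.x2 = _
        rw [h1, h2]
        linear_combination B * ht + hAl + hAm
      have hnc : normO c = f.eval l * f.eval m := by
        show c.x1 * c.x2 - dot c.u c.v = _
        rw [h1, h2, hu, hv, dot_smul_smul]
        linear_combination B * B * hnrm + A * B * ht + (f.eval m) * hAl + (A + B * l) * hAm
      have hrl : IsRoot g l := by
        simp only [hgdef, IsRoot.def, eval_add, eval_sub, eval_mul, eval_C]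
        rw [htc, hnc]; ring
      have hrm : IsRoot g m := by
        simp only [hgdef, IsRoot.def, eval_add, eval_sub, eval_mul, eval_C]
        rw [htc, hnc]; ring
      refine ⟨(l, m), ⟨hrl, hrm⟩, ?_⟩
      show (f.sum fun k ck => ck * geomH l m k)⁻¹ •
          (c - (f.sum fun k ck => ck * bco l m k) • 1) = x
      rw [← hB, ← hA]
      have hcA : c - A • (1 : SplitOctonion F) = B • x := by
        rw [← hpe]; exact add_sub_cancel_right _ _
      rw [hcA, inv_smul_smul₀ hBne]
    exact (Set.Finite.subset ((hSfin.prod hSfin).image _) hsub).not_infinite hinf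
  · -- scalar → infinite
    rintro ⟨γ, rfl⟩
    obtain ⟨l, m, hl, hm, hB⟩ :
        ∃ l m : F, f.eval l = γ ∧ f.eval m = γ ∧
          (f.sum fun k ck => ck * geomH l m k) = 0 := by
      set g : Polynomial F := f - C γ with hgdef
      have hgd : g.natDegree = f.natDegree := natDegree_sub_C
      have hg : g ≠ 0 := by
        intro h0
        rw [h0, natDegree_zero] at hgd
        omega
      have hsplit : Multiset.card g.roots = g.natDegree :=
        (splits_iff_card_roots).mp (IsAlgClosed.splits g)
      have hcard : 2 ≤ Multiset.card g.roots := by omega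
      have hrne : g.roots ≠ 0 := by
        intro h0
        rw [h0] at hcard
        simp at hcard
      obtain ⟨l, hlmem⟩ := Multiset.exists_mem_of_ne_zero hrne
      have hleval : f.eval l = γ := by
        have := (mem_roots hg).mp hlmem
        simp only [IsRoot.def, hgdef, eval_sub, eval_C, sub_eq_zero] at this
        exact this
      by_cases hex : ∃ m ∈ g.roots, m ≠ l
      · obtain ⟨m, hmmem, hne⟩ := hex
        have hmeval : f.eval m = γ := by
          have := (mem_roots hg).mp hmmem
          simp only [IsRoot.def, hgdef, eval_sub, eval_C, sub_eq_zero] at this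
          exact this
        refine ⟨l, m, hleval, hmeval, ?_⟩
        have key : (l - m) * (f.sum fun k ck => ck * geomH l m k)
            = f.eval l - f.eval m := by
          rw [eval_eq_sum, eval_eq_sum, Polynomial.sum_def, Polynomial.sum_def,
            Polynomial.sum_def, Finset.mul_sum, ← Finset.sum_sub_distrib]
          refine Finset.sum_congr rfl fun k _ => ?_
          linear_combination (f.coeff k) * sub_mul_geomH l m k
        have h0 : (l - m) * (f.sum fun k ck => ck * geomH l m k) = 0 := by
          rw [key, hleval, hmeval, sub_self]
        exact (mul_eq_zero.mp h0).resolve_left (sub_ne_zero.mpr (Ne.symm hne))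
      · push_neg at hex
        classical
        have hcount : g.roots.count l = Multiset.card g.roots :=
          Multiset.count_eq_card.mpr fun x hx => ((hex x hx)).symm
        have hmult : 2 ≤ rootMultiplicity l g := by
          rw [← count_roots]
          omega
        obtain ⟨q, hq⟩ : ((X : Polynomial F) - C l) ^ 2 ∣ g :=
          dvd_trans (pow_dvd_pow _ hmult) (pow_rootMultiplicity_dvd g l)
        refine ⟨l, l, hleval, hleval, ?_⟩
        have hBd : (f.sum fun k ck => ck * geomH l l k) = (derivative f).eval l := by
          rw [derivative_eval, Polynomial.sum_def, Polynomial.sum_def]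
          refine Finset.sum_congr rfl fun k _ => ?_
          rw [geomH_diag]
          ring
        have hdg : derivative f = derivative g := by
          rw [hgdef]
          simp
        rw [hBd, hdg, hq]
        simp [derivative_mul, derivative_pow]
    refine Set.infinite_of_injective_forall_mem
      (f := fun s : F => (⟨l, ![s, 0, 0], 0, m⟩ : SplitOctonion F)) ?_ ?_
    · intro a b hab
      have := congrArg (fun z : SplitOctonion F => z.u 0) hab
      simpa using this
    · intro s
      show peval f (⟨l, ![s, 0, 0], 0, m⟩ : SplitOctonion F) = γ • 1
      set w : SplitOctonion F := ⟨l, ![s, 0, 0], 0, m⟩ with hw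
      have hpow : ∀ k : ℕ, w ^ k =
          ⟨l ^ k, (s * geomH l m k) • ![1, 0, 0], 0, m ^ k⟩ := by
        intro k
        induction k with
        | zero =>
          rw [SplitOctonion.pow_zero']
          ext
          · simp
          · rename_i i; fin_cases i <;> simp
          · rename_i i; fin_cases i <;> simp
          · simp
        | succ k ih =>
          rw [SplitOctonion.pow_succ', ih]
          ext
          · simp [hw, dot, pow_succ]
          · rename_i i
            fin_cases i <;>
              simp [hw, cross, geomH_succ, Matrix.vecHead, Matrix.vecTail,
                Function.comp] <;> ring
          · rename_i i
            fin_cases i <;>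
              simp [hw, cross, Matrix.vecHead, Matrix.vecTail, Function.comp] <;> ring
          · simp [hw, dot, pow_succ]
      have hx1 : (peval f w).x1 = f.eval l := by
        unfold SplitOctonion.peval
        rw [Polynomial.sum_def, sum_x1, eval_eq_sum, Polynomial.sum_def]
        refine Finset.sum_congr rfl fun k _ => ?_
        rw [hpow k]
        simp
      have hx2 : (peval f w).x2 = f.eval m := by
        unfold SplitOctonion.peval
        rw [Polynomial.sum_def, sum_x2, eval_eq_sum, Polynomial.sum_def]
        refine Finset.sum_congr rfl fun k _ => ?_
        rw [hpow k]
        simp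
      have huf : (peval f w).u = 0 := by
        unfold SplitOctonion.peval
        rw [Polynomial.sum_def, sum_ufun]
        have hterm : ∀ k ∈ f.support, (f.coeff k • w ^ k).u
            = (f.coeff k * (s * geomH l m k)) • ![(1 : F), 0, 0] := by
          intro k _
          rw [hpow k]
          simp [smul_smul]
        rw [Finset.sum_congr rfl hterm, ← Finset.sum_smul]
        have hs : (∑ k ∈ f.support, f.coeff k * (s * geomH l m k))
            = s * (f.sum fun k ck => ck * geomH l m k) := by
          rw [Polynomial.sum_def, Finset.mul_sum]
          exact Finset.sum_congr rfl fun k _ => by ring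
        rw [hs, hB, mul_zero, zero_smul]
      have hvf : (peval f w).v = 0 := by
        unfold SplitOctonion.peval
        rw [Polynomial.sum_def, sum_vfun]
        refine Finset.sum_eq_zero fun k _ => ?_
        rw [hpow k]
        simp
      ext
      · rw [hx1, hl]; simp
      · rw [huf]; simp
      · rw [hvf]; simp
      · rw [hx2, hm]; simp
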